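/- Let w : [0,T] → ℝ be continuous with r < max w, and let χ minimize energy over {h ∈ AC[0,T] : h(0) = r, h ≥ w}. Then χ(T) = max_{0≤t≤T} w(t), and χ is constant on [t_max, T] where t_max is the first time w attains its maximum. -/
import Mathlib


open MeasureTheory Set

/-- `Adm T r w h g`: `h` is absolutely continuous on `[0,T]` with square-integrable
a.e. derivative `g`, `h 0 = r`, and `h ≥ w` on `[0,T]`. -/
def Adm (T r : ℝ) (w h g : ℝ → ℝ) : Prop :=
  IntegrableOn g (Icc 0 T) ∧ IntegrableOn (fun s => g s ^ 2) (Icc 0 T) ∧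
  (∀ t ∈ Icc (0:ℝ) T, h t = r + ∫ s in (0:ℝ)..t, g s) ∧
  (∀ t ∈ Icc (0:ℝ) T, w t ≤ h t)

/-- if `w` is continuous with `w 0 < r < max_{[0,T]} w`, `χ` minimizes
the energy over admissible functions, and `tmax` is the first time `w` attains its
maximum, then `χ T = max_{[0,T]} w` and `χ` is constant on `[tmax, T]`. -/
theorem stmt_8 (T r : ℝ) (hT : 0 < T) (w : ℝ → ℝ)
    (hw : ContinuousOn w (Icc 0 T)) (hw0 : w 0 < r)
    (hrmax : ∃ t ∈ Icc (0:ℝ) T, r < w t)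
    (tmax : ℝ) (htmax_mem : tmax ∈ Icc (0:ℝ) T)
    (htmax_max : w tmax = sSup (w '' Icc (0:ℝ) T))
    (htmax_first : ∀ t ∈ Icc (0:ℝ) T, w t = sSup (w '' Icc (0:ℝ) T) → tmax ≤ t)
    (χ g : ℝ → ℝ) (hadm : Adm T r w χ g)
    (hmin : ∀ h g', Adm T r w h g' →
      (∫ s in (0:ℝ)..T, g s ^ 2) ≤ ∫ s in (0:ℝ)..T, g' s ^ 2) :
    χ T = sSup (w '' Icc (0:ℝ) T) ∧ ∀ t ∈ Icc tmax T, χ t = χ tmax := by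
  obtain ⟨hg, hg2, hrep, hge⟩ := hadm
  set M := sSup (w '' Icc (0:ℝ) T) with hM
  have h0T : (0:ℝ) ∈ Icc (0:ℝ) T := ⟨le_refl 0, hT.le⟩
  have hχ0 : χ 0 = r := by simpa using hrep 0 h0T
  have hbdd : BddAbove (w '' Icc (0:ℝ) T) :=
    (isCompact_Icc.image_of_continuousOn hw).bddAbove
  have hleM : ∀ t ∈ Icc (0:ℝ) T, w t ≤ M := fun t ht =>
    le_csSup hbdd (mem_image_of_mem w ht)
  obtain ⟨t₀, ht₀, hrt₀⟩ := hrmax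
  have hrM : r < M := hrt₀.trans_le (hleM t₀ ht₀)
  have htmaxge : M ≤ χ tmax := htmax_max ▸ hge tmax htmax_mem
  -- continuity of χ on [0,T]
  have hguIcc : IntegrableOn g (uIcc (0:ℝ) T) := by rwa [uIcc_of_le hT.le]
  have hcont : ContinuousOn χ (Icc (0:ℝ) T) := by
    have h1 : ContinuousOn (fun x => r + ∫ t in (0:ℝ)..x, g t) (Icc (0:ℝ) T) := by
      have h2 := intervalIntegral.continuousOn_primitive_interval hguIcc
      rw [uIcc_of_le hT.le] at h2
      exact continuousOn_const.add h2
    exact h1.congr hrep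
  -- IVT: get s ∈ [0, tmax] with χ s = M
  have hsubint : Icc (0:ℝ) tmax ⊆ Icc (0:ℝ) T := Icc_subset_Icc le_rfl htmax_mem.2
  obtain ⟨s, hs, hχs⟩ := intermediate_value_Icc htmax_mem.1 (hcont.mono hsubint)
    ⟨by rw [hχ0]; exact hrM.le, htmaxge⟩
  have hs0 : (0:ℝ) ≤ s := hs.1
  have hstmax : s ≤ tmax := hs.2
  have hsT : s ≤ T := hstmax.trans htmax_mem.2
  -- interval integrability helper
  have hii : ∀ {f : ℝ → ℝ}, IntegrableOn f (Icc (0:ℝ) T) → ∀ {a b : ℝ},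
      a ∈ Icc (0:ℝ) T → b ∈ Icc (0:ℝ) T → IntervalIntegrable f volume a b := by
    intro f hf a b ha hb
    exact (hf.mono_set (uIcc_subset_Icc ha hb)).intervalIntegrable
  have hsTmem : s ∈ Icc (0:ℝ) T := ⟨hs0, hsT⟩
  have hTmem : T ∈ Icc (0:ℝ) T := ⟨hT.le, le_rfl⟩
  -- the competitor: freeze χ at time s
  set g' : ℝ → ℝ := fun t => if t ≤ s then g t else 0 with hg'def
  set h' : ℝ → ℝ := fun t => χ (min t s) with hh'def
  have hg'eq : g' = (Iic s).indicator g := by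
    funext t; simp [hg'def, Set.indicator_apply]
  have hg'sq : (fun t => g' t ^ 2) = (Iic s).indicator (fun t => g t ^ 2) := by
    funext t
    by_cases h : t ≤ s <;> simp [hg'def, Set.indicator_apply, h]
  have hg'int : IntegrableOn g' (Icc (0:ℝ) T) := by
    rw [hg'eq]
    exact hg.indicator measurableSet_Iic
  have hg'2int : IntegrableOn (fun t => g' t ^ 2) (Icc (0:ℝ) T) := by
    rw [hg'sq]
    exact hg2.indicator measurableSet_Iic
  -- integral computations for g'
  have hcongr0s : ∀ {f f' : ℝ → ℝ}, (∀ x, x ≤ s → f x = f' x) → ∀ t, 0 ≤ t → t ≤ s →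
      ∫ x in (0:ℝ)..t, f x = ∫ x in (0:ℝ)..t, f' x := by
    intro f f' hff t ht hts
    apply intervalIntegral.integral_congr
    intro x hx
    rw [uIcc_of_le ht] at hx
    exact hff x (hx.2.trans hts)
  have hcongr_g : ∀ t, 0 ≤ t → t ≤ s → (∫ x in (0:ℝ)..t, g' x) = ∫ x in (0:ℝ)..t, g x :=
    fun t ht hts => hcongr0s (fun x hx => by simp [hg'def, hx]) t ht hts
  have hcongr_g2 : ∀ t, 0 ≤ t → t ≤ s →
      (∫ x in (0:ℝ)..t, g' x ^ 2) = ∫ x in (0:ℝ)..t, g x ^ 2 :=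
    fun t ht hts => hcongr0s (fun x hx => by simp [hg'def, hx]) t ht hts
  have hmin1 : ∀ t, t ≤ s → h' t = χ t := fun t h => congrArg χ (min_eq_left h)
  have hmin2 : ∀ t, s ≤ t → h' t = χ s := fun t h => congrArg χ (min_eq_right h)
  have hzero_st : ∀ {f : ℝ → ℝ}, (∀ x, s < x → f x = 0) → ∀ t, s ≤ t →
      ∫ x in s..t, f x = 0 := by
    intro f hf t hst
    rw [show (0:ℝ) = ∫ x in s..t, (0:ℝ) by simp]
    apply intervalIntegral.integral_congr_ae
    filter_upwards with x hx
    rw [uIoc_of_le hst] at hx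
    exact hf x hx.1
  have hints : (∫ x in (0:ℝ)..s, g x) = χ s - r := by
    have := hrep s hsTmem; linarith
  -- h' admissibility
  have hadm' : Adm T r w h' g' := by
    refine ⟨hg'int, hg'2int, ?_, ?_⟩
    · intro t ht
      rcases le_or_gt t s with hts | hst
      · rw [hmin1 t hts, hrep t ht, hcongr_g t ht.1 hts]
      · have hsplit : (∫ x in (0:ℝ)..s, g' x) + ∫ x in s..t, g' x = ∫ x in (0:ℝ)..t, g' x :=
          intervalIntegral.integral_add_adjacent_intervals
            (hii hg'int h0T hsTmem) (hii hg'int hsTmem ht)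
        rw [hmin2 t hst.le, ← hsplit,
          hzero_st (fun x hx => by simp [hg'def, not_le.mpr hx]) t hst.le,
          hcongr_g s hs0 le_rfl, hints]
        ring
    · intro t ht
      rcases le_or_gt t s with hts | hst
      · rw [hmin1 t hts]
        exact hge t ht
      · rw [hmin2 t hst.le, hχs]
        exact hleM t ht
  -- energy comparison
  have hE := hmin h' g' hadm'
  have hsplitg2 : (∫ x in (0:ℝ)..s, g x ^ 2) + ∫ x in s..T, g x ^ 2
      = ∫ x in (0:ℝ)..T, g x ^ 2 :=
    intervalIntegral.integral_add_adjacent_intervals (hii hg2 h0T hsTmem) (hii hg2 hsTmem hTmem)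
  have hE' : (∫ x in (0:ℝ)..T, g' x ^ 2) = ∫ x in (0:ℝ)..s, g x ^ 2 := by
    have hsplit : (∫ x in (0:ℝ)..s, g' x ^ 2) + ∫ x in s..T, g' x ^ 2
        = ∫ x in (0:ℝ)..T, g' x ^ 2 :=
      intervalIntegral.integral_add_adjacent_intervals
        (hii hg'2int h0T hsTmem) (hii hg'2int hsTmem hTmem)
    rw [← hsplit, hzero_st (fun x hx => by simp [hg'def, not_le.mpr hx]) T hsT,
      hcongr_g2 s hs0 le_rfl]
    ring
  have hstT0 : (∫ x in s..T, g x ^ 2) ≤ 0 := by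
    rw [hE'] at hE; linarith
  have hstTnn : (0:ℝ) ≤ ∫ x in s..T, g x ^ 2 :=
    intervalIntegral.integral_nonneg hsT (fun x _ => sq_nonneg _)
  have hstTzero : (∫ x in s..T, g x ^ 2) = 0 := le_antisymm hstT0 hstTnn
  -- g = 0 a.e. on Ioc s T
  have hg2Ioc : IntegrableOn (fun x => g x ^ 2) (Ioc s T) :=
    hg2.mono_set (fun x hx => ⟨hs0.trans hx.1.le, hx.2⟩)
  have haezero : (fun x => g x ^ 2) =ᵐ[volume.restrict (Ioc s T)] 0 := by
    rw [← MeasureTheory.integral_eq_zero_iff_of_nonneg (fun x => sq_nonneg (g x)) hg2Ioc]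
    rw [← intervalIntegral.integral_of_le hsT]
    exact hstTzero
  have hgaezero : g =ᵐ[volume.restrict (Ioc s T)] 0 := by
    filter_upwards [haezero] with x hx
    have hx2 : g x ^ 2 = 0 := hx
    show g x = 0
    exact pow_eq_zero_iff (two_ne_zero) |>.mp hx2
  -- conclude χ = M on [tmax, T]
  have hconst : ∀ t ∈ Icc tmax T, χ t = M := by
    intro t ht
    have htmem : t ∈ Icc (0:ℝ) T := ⟨htmax_mem.1.trans ht.1, ht.2⟩
    have hst : s ≤ t := hstmax.trans ht.1
    have hzero : (∫ x in s..t, g x) = 0 := by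
      have hsub : Ioc s t ⊆ Ioc s T := Ioc_subset_Ioc le_rfl ht.2
      have : g =ᵐ[volume.restrict (Ioc s t)] 0 :=
        ae_restrict_of_ae_restrict_of_subset hsub hgaezero
      rw [intervalIntegral.integral_of_le hst]
      exact MeasureTheory.integral_eq_zero_of_ae this
    have hsplit : (∫ x in (0:ℝ)..s, g x) + ∫ x in s..t, g x = ∫ x in (0:ℝ)..t, g x :=
      intervalIntegral.integral_add_adjacent_intervals (hii hg h0T hsTmem) (hii hg hsTmem htmem)
    rw [hrep t htmem, ← hsplit, hzero, hints]
    ring_nf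
    linarith [hχs]
  have hχtmax : χ tmax = M := hconst tmax ⟨le_rfl, htmax_mem.2⟩
  exact ⟨hconst T ⟨htmax_mem.2, le_rfl⟩, fun t ht => by rw [hconst t ht, hχtmax]⟩
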